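/- The element (σ;σ')_{u,v}(X) of the nc Grassmannian is independent of the choice of representatives: if A, B ∈ σ and A', B' ∈ σ', then (A;A')_{u,v}(X) ~ (B;B')_{u,v}(X) in GL_m(M_{n+n'}(A)). -/

import Mathlib

open Matrix

/-- `n × n` matrices over `A`. -/
abbrev Mat (A : Type) (n : ℕ) : Type := Matrix (Fin n) (Fin n) A

/-- `m × m` block matrices with `n × n` blocks over `A`, i.e. `M_m(M_n(A))`. -/
abbrev BMat (A : Type) (m n : ℕ) : Type := Matrix (Fin m) (Fin m) (Mat A n)

section NC

variable {R : Type} [CommRing R] {A : Type} [Ring A]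

/-- Membership in the subgroup `H^{(d;m)}_n(A)` of invertible block lower-triangular
matrices `[[X,0],[Y,Z]]` with `X ∈ GL_{m-d}`, `Z ∈ GL_d`. -/
def memH (m d n : ℕ) (hd : d ≤ m) (Γ : BMat A m n) : Prop :=
  IsUnit Γ ∧
  (∀ i j : Fin m, (i : ℕ) < m - d → m - d ≤ (j : ℕ) → Γ i j = 0) ∧
  IsUnit (Matrix.of fun i j : Fin (m - d) =>
    Γ ⟨(i : ℕ), lt_of_lt_of_le i.isLt (Nat.sub_le m d)⟩
      ⟨(j : ℕ), lt_of_lt_of_le j.isLt (Nat.sub_le m d)⟩) ∧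
  IsUnit (Matrix.of fun i j : Fin d =>
    Γ ⟨m - d + (i : ℕ), by have := i.isLt; omega⟩
      ⟨m - d + (j : ℕ), by have := j.isLt; omega⟩)

/-- The relation `X ~ Y` iff `X = Y Γ` for some `Γ ∈ H^{(d;m)}_n(A)`. -/
def grel (m d n : ℕ) (hd : d ≤ m) (X Y : BMat A m n) : Prop :=
  ∃ Γ : BMat A m n, memH m d n hd Γ ∧ X = Y * Γ

/-- Direct sum of square matrices. -/
def dsumMat {n n' : ℕ} (X : Mat A n) (Y : Mat A n') : Mat A (n + n') :=
  Matrix.reindex finSumFinEquiv finSumFinEquiv (Matrix.fromBlocks X 0 0 Y)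

/-- Entrywise block direct sum `X ⊕̃ Y` of elements of `M_m(M_n(A))`, `M_m(M_{n'}(A))`. -/
def dsum {m n n' : ℕ} (X : BMat A m n) (Y : BMat A m n') : BMat A m (n + n') :=
  Matrix.of fun i j => dsumMat (X i j) (Y i j)

/-- Direct sum of square matrices with entries in a module. -/
def dsumW {W : Type} [AddCommMonoid W] {n n' : ℕ}
    (X : Matrix (Fin n) (Fin n) W) (Y : Matrix (Fin n') (Fin n') W) :
    Matrix (Fin (n + n')) (Fin (n + n')) W :=
  Matrix.reindex finSumFinEquiv finSumFinEquiv (Matrix.fromBlocks X 0 0 Y)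

/-- Block upper triangular matrix `[[P, H],[0, Q]]`. -/
def triW {W : Type} [AddCommMonoid W] {n n' : ℕ}
    (P : Matrix (Fin n) (Fin n) W) (H : Matrix (Fin n) (Fin n') W)
    (Q : Matrix (Fin n') (Fin n') W) :
    Matrix (Fin (n + n')) (Fin (n + n')) W :=
  Matrix.reindex finSumFinEquiv finSumFinEquiv (Matrix.fromBlocks P H 0 Q)

/-- The unipotent upper triangular matrix `[[I, T],[0, I]]` over `R`. -/
def uptri (R : Type) [CommRing R] {p q : ℕ} (T : Matrix (Fin p) (Fin q) R) :
    Matrix (Fin (p + q)) (Fin (p + q)) R :=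
  Matrix.reindex finSumFinEquiv finSumFinEquiv (Matrix.fromBlocks 1 T 0 1)

/-- Left multiplication of a representative by `s^{⊕ m}` for a scalar matrix `s` over `R`:
the similarity action on the nc Grassmannian. -/
def simAct [Algebra R A] {m N : ℕ} (s : Matrix (Fin N) (Fin N) R) (X : BMat A m N) :
    BMat A m N :=
  Matrix.of fun i j => s.map (algebraMap R A) * X i j

/-- Multiplication of a matrix over an `R`-module `W` by a matrix over `R` on the left. -/
def rmulL {W : Type} [AddCommMonoid W] [Module R W] {p q r : ℕ}
    (s : Matrix (Fin p) (Fin q) R) (X : Matrix (Fin q) (Fin r) W) :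
    Matrix (Fin p) (Fin r) W :=
  Matrix.of fun i j => ∑ k, s i k • X k j

/-- Multiplication of a matrix over an `R`-module `W` by a matrix over `R` on the right. -/
def rmulR {W : Type} [AddCommMonoid W] [Module R W] {p q r : ℕ}
    (X : Matrix (Fin p) (Fin q) W) (s : Matrix (Fin q) (Fin r) R) :
    Matrix (Fin p) (Fin r) W :=
  Matrix.of fun i j => ∑ k, s k j • X i k

/-- Vertical concatenation of matrices. -/
def vcat {α : Type} {p p' q : ℕ} (X : Matrix (Fin p) (Fin q) α)
    (Y : Matrix (Fin p') (Fin q) α) : Matrix (Fin (p + p')) (Fin q) α :=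
  Matrix.of fun i j =>
    if h : (i : ℕ) < p then X ⟨(i : ℕ), h⟩ j
    else Y ⟨(i : ℕ) - p, by have := i.isLt; omega⟩ j

/-- The affine embedding `X ↦ [[0, I],[I, X]]` in the case `(d;m) = (1;2)`. -/
def affEmb {n : ℕ} (X : Mat A n) : BMat A 2 n := !![0, 1; 1, X]

/-- The matrix `[[0, X],[0, 0]] ∈ M_{n+n'}(A)` with `X ∈ M_{n,n'}(A)` in the upper right
corner. -/
def cornerMat {n n' : ℕ} (X : Matrix (Fin n) (Fin n') A) : Mat A (n + n') :=
  Matrix.reindex finSumFinEquiv finSumFinEquiv (Matrix.fromBlocks 0 X 0 0)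

/-- The representative `(P;Q)_{u,v}(X)` of the element `(σ;σ')_{u,v}(X)`:
`P ⊕̃ Q + Σ_{j=1}^d [[0, X Q_{v, m-d+j}],[0,0]] ⊗ e^{(m)}_{d+u, m-d+j}`. -/
def ins {m d n n' : ℕ} (hd : d ≤ m) (u : Fin (m - d)) (v : Fin d)
    (P : BMat A m n) (Q : BMat A m n') (X : Matrix (Fin n) (Fin n') A) :
    BMat A m (n + n') :=
  dsum P Q + Matrix.of fun (i j : Fin m) =>
    if (i : ℕ) = d + (u : ℕ) ∧ m - d ≤ (j : ℕ) then
      cornerMat (X * Q ⟨(v : ℕ), lt_of_lt_of_le v.isLt hd⟩ j)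
    else 0

/-- The matrix unit `e^{(md,d)}_{u,v} ⊗ X`. -/
def eMat {md d : ℕ} {n : ℕ} (u : Fin md) (v : Fin d) (X : Mat A n) :
    Matrix (Fin md) (Fin d) (Mat A n) :=
  Matrix.of fun i j => if i = u ∧ j = v then X else 0

/-- The block matrix `[[I_d ⊗ I_n, 0],[-Y, I_{m-d} ⊗ I_n]]` used to define `σ(Y)`. -/
def shiftMat {m d n : ℕ} (hd : d ≤ m) (Y : Matrix (Fin (m - d)) (Fin d) (Mat A n)) :
    BMat A m n :=
  Matrix.of fun i j =>
    (if i = j then (1 : Mat A n) else 0) +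
    (if h : d ≤ (i : ℕ) ∧ (j : ℕ) < d then
      -Y ⟨(i : ℕ) - d, by have := i.isLt; omega⟩ ⟨(j : ℕ), h.2⟩
    else 0)

/-- A family `C` of sets of representatives is an nc set over `Gr^{(d;m)}(A)`:
it consists of invertible matrices, is saturated under the relation `~`
(i.e. it is a set of equivalence classes), and is closed under direct sums. -/
def IsNCSetCarrier {m d : ℕ} (hd : d ≤ m) (C : ∀ n, Set (BMat A m n)) : Prop :=
  (∀ n, ∀ a ∈ C n, IsUnit a) ∧
  (∀ n, ∀ a b : BMat A m n, grel m d n hd a b → (a ∈ C n ↔ b ∈ C n)) ∧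
  (∀ n n', ∀ a ∈ C n, ∀ b ∈ C n', dsum a b ∈ C (n + n'))

/-- `f` is an nc function on the nc set (with carrier) `C` over `Gr^{(d;m)}(A)`:
it descends to equivalence classes, preserves direct sums, and is similarity preserving. -/
def IsNCFun (R : Type) [CommRing R] [Algebra R A] {W : Type} [AddCommMonoid W] [Module R W]
    {m d : ℕ} (hd : d ≤ m) (C : ∀ n, Set (BMat A m n))
    (f : ∀ n, BMat A m n → Matrix (Fin n) (Fin n) W) : Prop :=
  (∀ n, ∀ a ∈ C n, ∀ b ∈ C n, grel m d n hd a b → f n a = f n b) ∧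
  (∀ n n', ∀ a ∈ C n, ∀ b ∈ C n', f (n + n') (dsum a b) = dsumW (f n a) (f n' b)) ∧
  (∀ n (s : (Matrix (Fin n) (Fin n) R)ˣ), ∀ a ∈ C n,
    simAct (s : Matrix (Fin n) (Fin n) R) a ∈ C n →
    f n (simAct (s : Matrix (Fin n) (Fin n) R) a) =
      rmulR (rmulL (s : Matrix (Fin n) (Fin n) R) (f n a))
        ((s⁻¹ : (Matrix (Fin n) (Fin n) R)ˣ) : Matrix (Fin n) (Fin n) R))

/-- `(u,v)`-admissibility of an nc set. -/
def Admissible (R : Type) [CommRing R] [Algebra R A] {m d : ℕ} (hd : d ≤ m)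
    (C : ∀ n, Set (BMat A m n)) (u : Fin (m - d)) (v : Fin d) : Prop :=
  ∀ n n' (a : BMat A m n) (b : BMat A m n') (X : Matrix (Fin n) (Fin n') A),
    a ∈ C n → b ∈ C n' →
    ∃ r : Rˣ, ins hd u v a b ((r : R) • X) ∈ C (n + n')

/-- The similarity-invariant envelope of an nc set. -/
def envC (R : Type) [CommRing R] [Algebra R A] {m d : ℕ} (hd : d ≤ m)
    (C : ∀ n, Set (BMat A m n)) : ∀ n, Set (BMat A m n) :=
  fun n => {x | ∃ (s : (Matrix (Fin n) (Fin n) R)ˣ) (a : BMat A m n),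
    a ∈ C n ∧ grel m d n hd x (simAct (s : Matrix (Fin n) (Fin n) R) a)}

end NC

section Res

variable {R : Type} [CommRing R] {A : Type} [Ring A] [Algebra R A]

/-- Entrywise inclusion `M_m(M_n(B)) → M_m(M_n(A))` for a subalgebra `B ⊆ A`. -/
def bmap (D : Subalgebra R A) {m n : ℕ} (b : BMat (↥D) m n) : BMat A m n :=
  Matrix.of fun i j => (b i j).map (fun x => (x : A))

/-- Entrywise inclusion for rectangular matrices over a subalgebra. -/
def rcmap (D : Subalgebra R A) {n n' : ℕ} (X : Matrix (Fin n) (Fin n') ↥D) :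
    Matrix (Fin n) (Fin n') A :=
  X.map (fun x => (x : A))

/-- `X` is invertible in `M_m(M_n(B))` for the subalgebra `B = D ⊆ A`. -/
def invIn (D : Subalgebra R A) {m n : ℕ} (X : BMat A m n) : Prop :=
  (∀ i j k l, X i j k l ∈ D) ∧
  ∃ Y : BMat A m n, (∀ i j k l, Y i j k l ∈ D) ∧ X * Y = 1 ∧ Y * X = 1

/-- The amplification `a^{⊕̃ n}` of an element `a ∈ M_m(A) = M_m(M_1(A))`. -/
def ampl {m : ℕ} (a : BMat A m 1) (n : ℕ) : BMat A m n :=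
  Matrix.of fun i j => Matrix.diagonal (fun _ => a i j 0 0)

/-- The matrix `r^{(d;m)}(P;Q)`: first `m-d` block columns are the last `m-d` block
columns of `P`, last `d` block columns are the last `d` block columns of `Q`. -/
def rmat {m d n : ℕ} (hd : d ≤ m) (P Q : BMat A m n) : BMat A m n :=
  Matrix.of fun i j =>
    if h : (j : ℕ) < m - d then P i ⟨d + (j : ℕ), by omega⟩ else Q i j

/-- The value `[B_{v,m-d+1},…,B_{v,m}] ⋅ ζ_u` of the `(d;m)`-Grassmannian resolvent,
where `ζ_u` is the `u`-th bottom block column of the inverse `Rinv` of an `r`-matrix. -/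
def resVal {m d n : ℕ} (hd : d ≤ m) (v : Fin d) (u : Fin (m - d))
    (Bm Rinv : BMat A m n) : Mat A n :=
  ∑ j : Fin d,
    Bm ⟨(v : ℕ), lt_of_lt_of_le v.isLt hd⟩ ⟨m - d + (j : ℕ), by have := j.isLt; omega⟩ *
    Rinv ⟨m - d + (j : ℕ), by have := j.isLt; omega⟩ ⟨d + (u : ℕ), by have := u.isLt; omega⟩

/-- Membership in the `(d;m)`-Grassmannian `B`-resolvent set of `π` (represented by `p`):
`b` represents an element of `Gr^{(d;m)}_n(B)` such that `π^{⊕n}` and `b` are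
transversal in `A`. -/
def ResMem {m d : ℕ} (hd : d ≤ m) (p : BMat A m 1) (D : Subalgebra R A) {n : ℕ}
    (b : BMat (↥D) m n) : Prop :=
  IsUnit b ∧ IsUnit (rmat hd (ampl p n) (bmap D b))

end Res

section Aux9

open Matrix

variable {A : Type} [Ring A] {n n' : ℕ}

lemma aux9_dsumMat_zero : dsumMat (0 : Mat A n) (0 : Mat A n') = 0 := by
  simp [dsumMat]

lemma aux9_dsumMat_one : dsumMat (1 : Mat A n) (1 : Mat A n') = 1 := by
  simp [dsumMat, Matrix.fromBlocks_one]

lemma aux9_dsumMat_add (P P' : Mat A n) (Q Q' : Mat A n') :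
    dsumMat P Q + dsumMat P' Q' = dsumMat (P + P') (Q + Q') := by
  ext i j
  simp only [dsumMat, Matrix.reindex_apply, Matrix.add_apply, Matrix.submatrix_apply]
  rcases h1 : finSumFinEquiv.symm i with k | k <;> rcases h2 : finSumFinEquiv.symm j with l | l <;>
    simp

lemma aux9_dsumMat_mul (P P' : Mat A n) (Q Q' : Mat A n') :
    dsumMat P Q * dsumMat P' Q' = dsumMat (P * P') (Q * Q') := by
  simp only [dsumMat, Matrix.reindex_apply, Matrix.submatrix_mul_equiv,
    Matrix.fromBlocks_multiply]
  simp

lemma aux9_dsumMat_sum {ι : Type} (s : Finset ι) (f : ι → Mat A n) (g : ι → Mat A n') :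
    ∑ i ∈ s, dsumMat (f i) (g i) = dsumMat (∑ i ∈ s, f i) (∑ i ∈ s, g i) := by
  classical
  induction s using Finset.induction_on with
  | empty => simp [aux9_dsumMat_zero]
  | insert _ _ h ih => simp [Finset.sum_insert h, ih, aux9_dsumMat_add]

lemma aux9_corner_mul_dsumMat (X : Matrix (Fin n) (Fin n') A) (P : Mat A n) (Q : Mat A n') :
    cornerMat X * dsumMat P Q = cornerMat (X * Q) := by
  simp only [cornerMat, dsumMat, Matrix.reindex_apply, Matrix.submatrix_mul_equiv,
    Matrix.fromBlocks_multiply]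
  simp

lemma aux9_corner_mul_corner (X Y : Matrix (Fin n) (Fin n') A) :
    cornerMat X * cornerMat Y = 0 := by
  simp only [cornerMat, Matrix.reindex_apply, Matrix.submatrix_mul_equiv,
    Matrix.fromBlocks_multiply]
  simp

lemma aux9_isUnit_one_add_sq {B : Type} [Ring B] (x : B) (h : x * x = 0) :
    IsUnit (1 + x) := by
  refine ⟨⟨1 + x, 1 - x, ?_, ?_⟩, rfl⟩
  · have : (1 + x) * (1 - x) = 1 - x * x := by noncomm_ring
    rw [this, h, sub_zero]
  · have : (1 - x) * (1 + x) = 1 - x * x := by noncomm_ring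
    rw [this, h, sub_zero]

lemma aux9_dsE_mul {p : ℕ} (a b : Matrix (Fin p) (Fin p) (Mat A n))
    (c e : Matrix (Fin p) (Fin p) (Mat A n')) :
    (Matrix.of fun i j => dsumMat (a i j) (c i j)) *
      (Matrix.of fun i j => dsumMat (b i j) (e i j)) =
    Matrix.of fun i j => dsumMat ((a * b) i j) ((c * e) i j) := by
  refine Matrix.ext fun i j => ?_
  simp only [Matrix.mul_apply, Matrix.of_apply]
  exact (Finset.sum_congr rfl fun k _ =>
      aux9_dsumMat_mul (a i k) (b k j) (c i k) (e k j)).trans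
    (aux9_dsumMat_sum Finset.univ (fun k => a i k * b k j) (fun k => c i k * e k j))

lemma aux9_dsE_one {p : ℕ} :
    (Matrix.of fun i j : Fin p =>
      dsumMat ((1 : Matrix (Fin p) (Fin p) (Mat A n)) i j)
              ((1 : Matrix (Fin p) (Fin p) (Mat A n')) i j)) = 1 := by
  ext i j
  by_cases h : i = j <;>
    simp [Matrix.one_apply, h, aux9_dsumMat_one, aux9_dsumMat_zero]

lemma aux9_isUnit_dsE {p : ℕ} {P : Matrix (Fin p) (Fin p) (Mat A n)}
    {Q : Matrix (Fin p) (Fin p) (Mat A n')} (hP : IsUnit P) (hQ : IsUnit Q) :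
    IsUnit (Matrix.of fun i j => dsumMat (P i j) (Q i j)) := by
  obtain ⟨P1, hP1, hP2⟩ := isUnit_iff_exists.mp hP
  obtain ⟨Q1, hQ1, hQ2⟩ := isUnit_iff_exists.mp hQ
  refine ⟨⟨_, Matrix.of fun i j => dsumMat (P1 i j) (Q1 i j), ?_, ?_⟩, rfl⟩
  · rw [aux9_dsE_mul, hP1, hQ1, aux9_dsE_one]
  · rw [aux9_dsE_mul, hP2, hQ2, aux9_dsE_one]

lemma aux9_dsum_mul {m : ℕ} (a b : BMat A m n) (c e : BMat A m n') :
    dsum a c * dsum b e = dsum (a * b) (c * e) :=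
  aux9_dsE_mul a b c e

lemma aux9_dsum_one {m : ℕ} : (dsum (1 : BMat A m n) (1 : BMat A m n')) = 1 :=
  aux9_dsE_one

end Aux9

section Aux9b

open Matrix

variable {A : Type} [Ring A]

/-- Splitting equivalence for `Fin m`. -/
def eS (m d : ℕ) (hd : d ≤ m) : Fin (m - d) ⊕ Fin d ≃ Fin m :=
  finSumFinEquiv.trans (finCongr (by omega))

lemma eS_inl (m d : ℕ) (hd : d ≤ m) (i : Fin (m - d)) :
    eS m d hd (Sum.inl i) = ⟨(i : ℕ), by omega⟩ := by
  ext; simp [eS]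

lemma eS_inr (m d : ℕ) (hd : d ≤ m) (i : Fin d) :
    eS m d hd (Sum.inr i) = ⟨m - d + (i : ℕ), by omega⟩ := by
  ext; simp [eS]

lemma sum_eS {β : Type} [AddCommMonoid β] (m d : ℕ) (hd : d ≤ m) (f : Fin m → β) :
    ∑ k, f k = (∑ i : Fin (m - d), f (eS m d hd (.inl i))) +
      ∑ i : Fin d, f (eS m d hd (.inr i)) := by
  rw [← Equiv.sum_comp (eS m d hd) f, Fintype.sum_sum_type]

/-- Top-left corner. -/
def cTL {m N : ℕ} (d : ℕ) (hd : d ≤ m) (Γ : BMat A m N) :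
    Matrix (Fin (m - d)) (Fin (m - d)) (Mat A N) :=
  Matrix.of fun i j => Γ (eS m d hd (.inl i)) (eS m d hd (.inl j))

/-- Bottom-right corner. -/
def cBR {m N : ℕ} (d : ℕ) (hd : d ≤ m) (Γ : BMat A m N) :
    Matrix (Fin d) (Fin d) (Mat A N) :=
  Matrix.of fun i j => Γ (eS m d hd (.inr i)) (eS m d hd (.inr j))

lemma memH_iff {m N : ℕ} (d : ℕ) (hd : d ≤ m) (Γ : BMat A m N) :
    memH m d N hd Γ ↔
      IsUnit Γ ∧
      (∀ i j : Fin m, (i : ℕ) < m - d → m - d ≤ (j : ℕ) → Γ i j = 0) ∧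
      IsUnit (cTL d hd Γ) ∧ IsUnit (cBR d hd Γ) := by
  have h1 : (Matrix.of fun i j : Fin (m - d) =>
      Γ ⟨(i : ℕ), lt_of_lt_of_le i.isLt (Nat.sub_le m d)⟩
        ⟨(j : ℕ), lt_of_lt_of_le j.isLt (Nat.sub_le m d)⟩) = cTL d hd Γ := by
    refine Matrix.ext fun i j => ?_
    simp only [Matrix.of_apply, cTL, eS_inl]
  have h2 : (Matrix.of fun i j : Fin d =>
      Γ ⟨m - d + (i : ℕ), by have := i.isLt; omega⟩
        ⟨m - d + (j : ℕ), by have := j.isLt; omega⟩) = cBR d hd Γ := by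
    refine Matrix.ext fun i j => ?_
    simp only [Matrix.of_apply, cBR, eS_inr]
  unfold memH
  rw [h1, h2]

lemma memH_mul {m N : ℕ} {d : ℕ} {hd : d ≤ m} {Γ₁ Γ₂ : BMat A m N}
    (h1 : memH m d N hd Γ₁) (h2 : memH m d N hd Γ₂) : memH m d N hd (Γ₁ * Γ₂) := by
  rw [memH_iff] at h1 h2 ⊢
  obtain ⟨u1, z1, t1, b1⟩ := h1
  obtain ⟨u2, z2, t2, b2⟩ := h2
  refine ⟨u1.mul u2, ?_, ?_, ?_⟩
  · intro i j hi hj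
    rw [Matrix.mul_apply]
    refine Finset.sum_eq_zero fun k _ => ?_
    by_cases hk : (k : ℕ) < m - d
    · rw [z2 k j hk hj, mul_zero]
    · rw [z1 i k hi (le_of_not_gt hk), zero_mul]
  · have hc : cTL d hd (Γ₁ * Γ₂) = cTL d hd Γ₁ * cTL d hd Γ₂ := by
      refine Matrix.ext fun i j => ?_
      simp only [cTL, Matrix.of_apply, Matrix.mul_apply]
      rw [sum_eS m d hd]
      have hz : ∑ k : Fin d,
          Γ₁ (eS m d hd (.inl i)) (eS m d hd (.inr k)) *
          Γ₂ (eS m d hd (.inr k)) (eS m d hd (.inl j)) = 0 := by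
        refine Finset.sum_eq_zero fun k _ => ?_
        rw [z1 _ _ (by rw [eS_inl]; exact i.isLt) (by rw [eS_inr]; simp), zero_mul]
      rw [hz, add_zero]
    rw [hc]; exact t1.mul t2
  · have hc : cBR d hd (Γ₁ * Γ₂) = cBR d hd Γ₁ * cBR d hd Γ₂ := by
      refine Matrix.ext fun i j => ?_
      simp only [cBR, Matrix.of_apply, Matrix.mul_apply]
      rw [sum_eS m d hd]
      have hz : ∑ k : Fin (m - d),
          Γ₁ (eS m d hd (.inr i)) (eS m d hd (.inl k)) *
          Γ₂ (eS m d hd (.inl k)) (eS m d hd (.inr j)) = 0 := by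
        refine Finset.sum_eq_zero fun k _ => ?_
        rw [z2 _ _ (by rw [eS_inl]; exact k.isLt) (by rw [eS_inr]; simp), mul_zero]
      rw [hz, zero_add]
    rw [hc]; exact b1.mul b2

lemma memH_one_add {m N : ℕ} {d : ℕ} {hd : d ≤ m} (M : BMat A m N)
    (hcol : ∀ i j : Fin m, m - d ≤ (j : ℕ) → M i j = 0) (hM2 : M * M = 0) :
    memH m d N hd (1 + M) := by
  rw [memH_iff]
  refine ⟨aux9_isUnit_one_add_sq M hM2, ?_, ?_, ?_⟩
  · intro i j hi hj
    rw [Matrix.add_apply, hcol i j hj, add_zero, Matrix.one_apply_ne]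
    exact fun hij => by omega
  · have hc : cTL d hd (1 + M) = 1 + cTL d hd M := by
      refine Matrix.ext fun i j => ?_
      simp only [cTL, Matrix.of_apply, Matrix.add_apply]
      congr 1
      rw [Matrix.one_apply, Matrix.one_apply]
      by_cases h : i = j
      · simp [h]
      · rw [if_neg h, if_neg fun he => h (by simpa using (eS m d hd).injective he)]
    have hsq : cTL d hd M * cTL d hd M = 0 := by
      have : cTL d hd M * cTL d hd M = cTL d hd (M * M) := by
        refine Matrix.ext fun i j => ?_
        simp only [cTL, Matrix.of_apply, Matrix.mul_apply]
        rw [sum_eS m d hd]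
        have hz : ∑ k : Fin d,
            M (eS m d hd (.inl i)) (eS m d hd (.inr k)) *
            M (eS m d hd (.inr k)) (eS m d hd (.inl j)) = 0 :=
          Finset.sum_eq_zero fun k _ => by
            rw [hcol _ _ (by rw [eS_inr]; simp), zero_mul]
        rw [hz, add_zero]
      rw [this, hM2]
      refine Matrix.ext fun i j => ?_
      simp [cTL]
    rw [hc]; exact aux9_isUnit_one_add_sq _ hsq
  · have hc : cBR d hd (1 + M) = 1 := by
      refine Matrix.ext fun i j => ?_
      simp only [cBR, Matrix.of_apply, Matrix.add_apply]
      rw [hcol _ _ (by rw [eS_inr]; simp), add_zero]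
      rw [Matrix.one_apply, Matrix.one_apply]
      by_cases h : i = j
      · simp [h]
      · rw [if_neg fun he => h (by simpa using (eS m d hd).injective he), if_neg h]
    rw [hc]; exact isUnit_one

lemma memH_dsum {m n n' : ℕ} {d : ℕ} {hd : d ≤ m} {Γ : BMat A m n} {Γ' : BMat A m n'}
    (h : memH m d n hd Γ) (h' : memH m d n' hd Γ') :
    memH m d (n + n') hd (dsum Γ Γ') := by
  rw [memH_iff] at h h' ⊢
  obtain ⟨u1, z1, t1, b1⟩ := h
  obtain ⟨u2, z2, t2, b2⟩ := h'
  refine ⟨?_, ?_, ?_, ?_⟩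
  · obtain ⟨D, hD1, hD2⟩ := isUnit_iff_exists.mp u1
    obtain ⟨D', hD1', hD2'⟩ := isUnit_iff_exists.mp u2
    refine ⟨⟨dsum Γ Γ', dsum D D', ?_, ?_⟩, rfl⟩
    · rw [aux9_dsum_mul, hD1, hD1', aux9_dsum_one]
    · rw [aux9_dsum_mul, hD2, hD2', aux9_dsum_one]
  · intro i j hi hj
    show dsumMat (Γ i j) (Γ' i j) = 0
    rw [z1 i j hi hj, z2 i j hi hj, aux9_dsumMat_zero]
  · have hc : cTL d hd (dsum Γ Γ') =
        Matrix.of fun i j => dsumMat (cTL d hd Γ i j) (cTL d hd Γ' i j) := rfl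
    rw [hc]; exact aux9_isUnit_dsE t1 t2
  · have hc : cBR d hd (dsum Γ Γ') =
        Matrix.of fun i j => dsumMat (cBR d hd Γ i j) (cBR d hd Γ' i j) := rfl
    rw [hc]; exact aux9_isUnit_dsE b1 b2

end Aux9b

section Aux9c

open Matrix

variable {A : Type} [Ring A] {m d n n' : ℕ}

/-- The block matrix `e_{d+u,v} ⊗ cornerMat X`. -/
def CMm (m d : ℕ) (u : Fin (m - d)) (v : Fin d) (X : Matrix (Fin n) (Fin n') A) :
    BMat A m (n + n') :=
  Matrix.of fun i k =>
    if (i : ℕ) = d + (u : ℕ) ∧ (k : ℕ) = (v : ℕ) then cornerMat X else 0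

/-- Projection onto the first `m - d` block columns. -/
def PiM (m d : ℕ) (n n' : ℕ) : BMat A m (n + n') :=
  Matrix.of fun k j => if k = j ∧ (j : ℕ) < m - d then 1 else 0

lemma mul_PiM (Y : BMat A m (n + n')) :
    Y * PiM m d n n' = Matrix.of fun (i j : Fin m) => if (j : ℕ) < m - d then Y i j else 0 := by
  refine Matrix.ext fun i j => ?_
  rw [Matrix.mul_apply, Finset.sum_eq_single j]
  · by_cases hj : (j : ℕ) < m - d <;> simp [PiM, hj]
  · intro k _ hk
    have : PiM (A := A) m d n n' k j = 0 := by simp [PiM, hk]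
    rw [this, mul_zero]
  · intro hj; exact absurd (Finset.mem_univ j) hj

lemma CM_mul_dsum (hd : d ≤ m) (u : Fin (m - d)) (v : Fin d)
    (X : Matrix (Fin n) (Fin n') A) (a : BMat A m n) (a' : BMat A m n') :
    CMm m d u v X * dsum a a' = Matrix.of fun (i j : Fin m) =>
      if (i : ℕ) = d + (u : ℕ) then
        cornerMat (X * a' ⟨(v : ℕ), lt_of_lt_of_le v.isLt hd⟩ j) else 0 := by
  refine Matrix.ext fun i j => ?_
  rw [Matrix.mul_apply,
    Finset.sum_eq_single (⟨(v : ℕ), lt_of_lt_of_le v.isLt hd⟩ : Fin m)]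
  · simp only [CMm, Matrix.of_apply]
    by_cases hi : (i : ℕ) = d + (u : ℕ)
    · rw [if_pos ⟨hi, trivial⟩, if_pos hi]
      exact aux9_corner_mul_dsumMat X _ _
    · rw [if_neg (fun hc => hi hc.1), if_neg hi, zero_mul]
  · intro k _ hk
    have : CMm m d u v X i k = 0 := by
      simp only [CMm, Matrix.of_apply]
      exact if_neg fun hc => hk (Fin.ext hc.2)
    rw [this, zero_mul]
  · intro hj; exact absurd (Finset.mem_univ _) hj

lemma CM_sq (u : Fin (m - d)) (v : Fin d) (X : Matrix (Fin n) (Fin n') A) :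
    CMm m d u v X * CMm m d u v X = 0 := by
  refine Matrix.ext fun i j => ?_
  rw [Matrix.mul_apply]
  have : ∀ k : Fin m, CMm m d u v X i k * CMm m d u v X k j = 0 := by
    intro k
    simp only [CMm, Matrix.of_apply]
    by_cases h1 : (i : ℕ) = d + (u : ℕ) ∧ (k : ℕ) = (v : ℕ)
    · by_cases h2 : (k : ℕ) = d + (u : ℕ) ∧ (j : ℕ) = (v : ℕ)
      · rw [if_pos h1, if_pos h2, aux9_corner_mul_corner]
      · rw [if_neg h2, mul_zero]
    · rw [if_neg h1, zero_mul]
  rw [Finset.sum_eq_zero fun k _ => this k]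
  rfl

lemma CM_conj (u : Fin (m - d)) (v : Fin d) (X : Matrix (Fin n) (Fin n') A)
    (Y : BMat A m (n + n')) (hY : ∀ i j, ∃ P Q, Y i j = dsumMat P Q) :
    CMm m d u v X * Y * CMm m d u v X = 0 := by
  refine Matrix.ext fun i j => ?_
  rw [Matrix.mul_apply]
  refine (Finset.sum_eq_zero fun k _ => ?_).trans (by rfl)
  rw [Matrix.mul_apply, Finset.sum_mul]
  refine Finset.sum_eq_zero fun l _ => ?_
  obtain ⟨P, Q, hPQ⟩ := hY l k
  simp only [CMm, Matrix.of_apply]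
  by_cases h1 : (i : ℕ) = d + (u : ℕ) ∧ (l : ℕ) = (v : ℕ)
  · by_cases h2 : (k : ℕ) = d + (u : ℕ) ∧ (j : ℕ) = (v : ℕ)
    · rw [if_pos h1, if_pos h2, hPQ, aux9_corner_mul_dsumMat, aux9_corner_mul_corner]
    · rw [if_neg h2, mul_zero]
  · rw [if_neg h1, zero_mul, zero_mul]

def IsBlocky (Y : BMat A m (n + n')) : Prop :=
  ∀ i j, ∃ (P : Mat A n) (Q : Mat A n'), Y i j = dsumMat P Q

lemma blocky_dsum (a : BMat A m n) (a' : BMat A m n') : IsBlocky (dsum a a') :=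
  fun i j => ⟨a i j, a' i j, rfl⟩

lemma blocky_PiM : IsBlocky (PiM (A := A) m d n n') := by
  intro i j
  by_cases h : i = j ∧ (j : ℕ) < m - d
  · exact ⟨1, 1, by simp [PiM, h, aux9_dsumMat_one]⟩
  · exact ⟨0, 0, by simp [PiM, h, aux9_dsumMat_zero]⟩

lemma blocky_mul {Y Z : BMat A m (n + n')} (hY : IsBlocky Y) (hZ : IsBlocky Z) :
    IsBlocky (Y * Z) := by
  intro i j
  choose P Q hPQ using hY
  choose P' Q' hPQ' using hZ
  refine ⟨∑ k, P i k * P' k j, ∑ k, Q i k * Q' k j, ?_⟩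
  rw [Matrix.mul_apply]
  refine (Finset.sum_congr rfl fun k _ => ?_).trans
    (aux9_dsumMat_sum Finset.univ (fun k => P i k * P' k j) (fun k => Q i k * Q' k j))
  rw [hPQ, hPQ', aux9_dsumMat_mul]

lemma ins_factor (hd : d ≤ m) (u : Fin (m - d)) (v : Fin d)
    (a a1 : BMat A m n) (a' a1' : BMat A m n')
    (hA : a * a1 = 1) (hA' : a' * a1' = 1) (X : Matrix (Fin n) (Fin n') A) :
    ins hd u v a a' X = (1 + CMm m d u v X) * dsum a a' *
      (1 - dsum a1 a1' * (CMm m d u v X * dsum a a' * PiM m d n n')) := by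
  have h1 : dsum a a' * dsum a1 a1' = 1 := by
    rw [aux9_dsum_mul, hA, hA', aux9_dsum_one]
  have expand : (1 + CMm m d u v X) * dsum a a' *
      (1 - dsum a1 a1' * (CMm m d u v X * dsum a a' * PiM m d n n')) =
      dsum a a' + CMm m d u v X * dsum a a'
        - (dsum a a' * dsum a1 a1') * (CMm m d u v X * dsum a a' * PiM m d n n')
        - CMm m d u v X * ((dsum a a' * dsum a1 a1') *
            (CMm m d u v X * (dsum a a' * PiM m d n n'))) := by
    noncomm_ring
  have h2 : CMm m d u v X * (CMm m d u v X * (dsum a a' * PiM m d n n')) = 0 := by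
    rw [← mul_assoc, CM_sq, zero_mul]
  rw [expand, h1, one_mul, one_mul, h2, sub_zero, CM_mul_dsum hd u v X a a', mul_PiM]
  refine Matrix.ext fun i j => ?_
  show dsumMat (a i j) (a' i j)
      + (if (i : ℕ) = d + (u : ℕ) ∧ m - d ≤ (j : ℕ)
          then cornerMat (X * a' ⟨(v : ℕ), lt_of_lt_of_le v.isLt hd⟩ j) else 0)
    = dsumMat (a i j) (a' i j)
      + (if (i : ℕ) = d + (u : ℕ)
          then cornerMat (X * a' ⟨(v : ℕ), lt_of_lt_of_le v.isLt hd⟩ j) else 0)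
      - (if (j : ℕ) < m - d then
          (if (i : ℕ) = d + (u : ℕ)
            then cornerMat (X * a' ⟨(v : ℕ), lt_of_lt_of_le v.isLt hd⟩ j) else 0) else 0)
  by_cases hi : (i : ℕ) = d + (u : ℕ)
  · by_cases hj : (j : ℕ) < m - d
    · rw [if_neg (by omega : ¬((i : ℕ) = d + (u : ℕ) ∧ m - d ≤ (j : ℕ))), if_pos hj,
        if_pos hi, add_sub_cancel_right, add_zero]
    · rw [if_pos (⟨hi, by omega⟩ : (i : ℕ) = d + (u : ℕ) ∧ m - d ≤ (j : ℕ)), if_neg hj,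
        if_pos hi, sub_zero]
  · rw [if_neg (fun hc => hi hc.1), if_neg hi]
    by_cases hj : (j : ℕ) < m - d
    · rw [if_pos hj, sub_zero]
    · rw [if_neg hj, sub_zero]

end Aux9c

section Aux9d

open Matrix

variable {A : Type} [Ring A] {m d n n' : ℕ}

lemma Ma_col (u : Fin (m - d)) (v : Fin d) (X : Matrix (Fin n) (Fin n') A)
    (a E : BMat A m n) (a' E' : BMat A m n') :
    ∀ i j : Fin m, m - d ≤ (j : ℕ) →
      (dsum E E' * (CMm m d u v X * dsum a a' * PiM (A := A) m d n n')) i j = 0 := by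
  intro i j hj
  rw [mul_PiM, Matrix.mul_apply]
  refine Finset.sum_eq_zero fun k _ => ?_
  rw [Matrix.of_apply, if_neg (by omega : ¬((j : ℕ) < m - d)), mul_zero]

lemma Ma_sq (u : Fin (m - d)) (v : Fin d) (X : Matrix (Fin n) (Fin n') A)
    (a E : BMat A m n) (a' E' : BMat A m n') :
    (dsum E E' * (CMm m d u v X * dsum a a' * PiM (A := A) m d n n')) *
      (dsum E E' * (CMm m d u v X * dsum a a' * PiM (A := A) m d n n')) = 0 := by
  have hB : IsBlocky ((dsum a a' * PiM (A := A) m d n n') * dsum E E') :=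
    blocky_mul (blocky_mul (blocky_dsum a a') blocky_PiM) (blocky_dsum E E')
  have key : (dsum E E' * (CMm m d u v X * dsum a a' * PiM (A := A) m d n n')) *
      (dsum E E' * (CMm m d u v X * dsum a a' * PiM (A := A) m d n n')) =
      dsum E E' * ((CMm m d u v X * ((dsum a a' * PiM (A := A) m d n n') * dsum E E') *
        CMm m d u v X) * (dsum a a' * PiM (A := A) m d n n')) := by
    noncomm_ring
  rw [key, CM_conj u v X _ hB, zero_mul, mul_zero]

end Aux9d

/-- `(σ;σ')_{u,v}(X)` is independent of the choice of representatives. -/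
theorem ins_well_defined {R : Type} [CommRing R] {A : Type} [Ring A] [Algebra R A]
    (m d : ℕ) (hd1 : 1 ≤ d) (hd : d ≤ m) (u : Fin (m - d)) (v : Fin d) {n n' : ℕ}
    (a b : BMat A m n) (a' b' : BMat A m n')
    (ha : IsUnit a) (hb : IsUnit b) (ha' : IsUnit a') (hb' : IsUnit b')
    (h : grel m d n hd a b) (h' : grel m d n' hd a' b')
    (X : Matrix (Fin n) (Fin n') A) :
    grel m d (n + n') hd (ins hd u v a a' X) (ins hd u v b b' X) := by
  obtain ⟨Γ, hΓ, hab⟩ := h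
  obtain ⟨Γ', hΓ', hab'⟩ := h'
  obtain ⟨a1, ha1, -⟩ := isUnit_iff_exists.mp ha
  obtain ⟨c1, hc1, -⟩ := isUnit_iff_exists.mp ha'
  obtain ⟨b1, hb1, -⟩ := isUnit_iff_exists.mp hb
  obtain ⟨e1, he1, -⟩ := isUnit_iff_exists.mp hb'
  have hfa := ins_factor hd u v a a1 a' c1 ha1 hc1 X
  have hfb := ins_factor hd u v b b1 b' e1 hb1 he1 X
  have hMa_col := Ma_col u v X a a1 a' c1
  have hMb_col := Ma_col u v X b b1 b' e1
  have hMa_sq := Ma_sq u v X a a1 a' c1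
  have hMb_sq := Ma_sq u v X b b1 b' e1
  set Ma := dsum a1 c1 * (CMm m d u v X * dsum a a' * PiM (A := A) m d n n') with hMa
  set Mb := dsum b1 e1 * (CMm m d u v X * dsum b b' * PiM (A := A) m d n n') with hMb
  have hMaH : memH m d (n + n') hd (1 - Ma) := by
    rw [sub_eq_add_neg]
    refine memH_one_add (-Ma) (fun i j hj => by
      rw [Matrix.neg_apply, hMa_col i j hj, neg_zero]) ?_
    rw [neg_mul_neg, hMa_sq]
  have hMbH : memH m d (n + n') hd (1 + Mb) :=
    memH_one_add Mb hMb_col hMb_sq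
  have hD : dsum a a' = dsum b b' * dsum Γ Γ' := by
    rw [hab, hab', aux9_dsum_mul]
  have hunit : (1 - Mb) * (1 + Mb) = 1 := by
    have hw : (1 - Mb) * (1 + Mb) = 1 - Mb * Mb := by noncomm_ring
    rw [hw, hMb_sq, sub_zero]
  refine ⟨(1 + Mb) * dsum Γ Γ' * (1 - Ma),
    memH_mul (memH_mul hMbH (memH_dsum hΓ hΓ')) hMaH, ?_⟩
  rw [hfa, hfb, hD]
  have hassoc : ((1 + CMm m d u v X) * dsum b b' * (1 - Mb)) *
      ((1 + Mb) * dsum Γ Γ' * (1 - Ma)) =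
      (1 + CMm m d u v X) * dsum b b' *
        (((1 - Mb) * (1 + Mb)) * (dsum Γ Γ' * (1 - Ma))) := by
    noncomm_ring
  rw [hassoc, hunit, one_mul, ← mul_assoc, ← mul_assoc]
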